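/- arXiv:2306.14550 — 2 statements merged into one kernel-verified Lean document; each statement's English description precedes it below -/
import Mathlib

section
/- Let f : ℝ → ℂ be continuous and compactly supported. Then the squared L² norm of the time-focused transform of f satisfies ∫_{ℝ²} |M^τ f(t,ω)|² dt dω = ∫_{ℝ²} σ(t) |f(x)|² |h(σ(t)(x−t))|² dx dt. -/
open MeasureTheory Filter
open scoped FourierTransform Real

/-- Time-focused atom `h_{t,ω,σ}(x) = √(γ'(ω) σ(t)) e^{2πi γ(ω) x} h(σ(t)(x − t))`. -/
noncomputable def timeAtom (h : ℝ → ℂ) (γ σ : ℝ → ℝ) (t ω x : ℝ) : ℂ :=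
  (Real.sqrt (deriv γ ω * σ t) : ℂ) *
    Complex.exp (2 * (π : ℂ) * Complex.I * (γ ω : ℂ) * (x : ℂ)) *
    h (σ t * (x - t))

/-- Time-focused transform `M^τ f(t,ω) = ⟨f, h_{t,ω,σ}⟩_{L²}`. -/
noncomputable def timeTransform (h : ℝ → ℂ) (γ σ : ℝ → ℝ) (f : ℝ → ℂ) (t ω : ℝ) : ℂ :=
  ∫ x : ℝ, f x * (starRingEnd ℂ) (timeAtom h γ σ t ω x)

section Aux
open Complex Real
open scoped Topology Pointwise


lemma fourier_conj (g : ℝ → ℂ) (ξ : ℝ) :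
    𝓕 (fun x ↦ (starRingEnd ℂ) (g (-x))) ξ = (starRingEnd ℂ) (𝓕 g ξ) := by
  rw [Real.fourier_real_eq_integral_exp_smul, Real.fourier_real_eq_integral_exp_smul]
  rw [← integral_conj, ← MeasureTheory.integral_neg_eq_self
    (fun x => Complex.exp (↑(-2 * π * x * ξ) * I) • (starRingEnd ℂ) (g (-x)))]
  congr 1
  ext x
  simp only [smul_eq_mul, map_mul, neg_neg, ← Complex.exp_conj, Complex.conj_I,
    Complex.conj_ofReal, mul_neg]
  congr 2
  push_cast
  ring

lemma fourier_autocorr (g : ℝ → ℂ) (hgc : Continuous g) (hgs : HasCompactSupport g) (ξ : ℝ) :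
    𝓕 (convolution g (fun x ↦ (starRingEnd ℂ) (g (-x))) (ContinuousLinearMap.mul ℂ ℂ) volume) ξ
      = ((‖𝓕 g ξ‖ ^ 2 : ℝ) : ℂ) := by
  set gt : ℝ → ℂ := fun x ↦ (starRingEnd ℂ) (g (-x)) with hgt
  have hgtc : Continuous gt := Complex.continuous_conj.comp (hgc.comp continuous_neg)
  have hgts : HasCompactSupport gt := by
    have h1 : HasCompactSupport (fun x : ℝ ↦ g (-x)) :=
      hgs.comp_homeomorph (Homeomorph.neg ℝ)
    exact h1.comp_left (map_zero _)
  have hint : Integrable (Function.uncurry fun x t : ℝ ↦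
      Complex.exp (↑(-2 * π * x * ξ) * I) * (g t * gt (x - t))) (volume.prod volume) := by
    apply Continuous.integrable_of_hasCompactSupport
    · apply Continuous.mul
      · apply Continuous.cexp
        exact (Complex.continuous_ofReal.comp (by fun_prop)).mul continuous_const
      · exact (hgc.comp continuous_snd).mul (hgtc.comp (continuous_fst.sub continuous_snd))
    · apply HasCompactSupport.intro (K := (tsupport gt + tsupport g) ×ˢ tsupport g)
        ((IsCompact.add hgts hgs).prod hgs)
      rintro ⟨x, t⟩ hxt
      simp only [Set.mem_prod, Set.mem_add, not_and_or] at hxt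
      by_contra hne
      have ht : t ∈ tsupport g := subset_tsupport g (by
        intro h0; apply hne; simp [Function.uncurry, h0])
      have hx : x - t ∈ tsupport gt := subset_tsupport gt (by
        intro h0; apply hne; simp [Function.uncurry, h0])
      exact absurd (Or.elim hxt (fun hh => hh ⟨x - t, hx, t, ht, by ring⟩) (fun hh => hh ht)) not_false
  rw [Real.fourier_real_eq_integral_exp_smul]
  have : ∀ x : ℝ, Complex.exp (↑(-2 * π * x * ξ) * I) •
      convolution g gt (ContinuousLinearMap.mul ℂ ℂ) volume x
      = ∫ t : ℝ, Complex.exp (↑(-2 * π * x * ξ) * I) * (g t * gt (x - t)) := by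
    intro x
    rw [convolution_def, ← integral_smul]
    simp only [smul_eq_mul, ContinuousLinearMap.mul_apply']
  rw [integral_congr_ae (Filter.Eventually.of_forall this)]
  rw [integral_integral_swap hint]
  have inner_eq : ∀ t : ℝ, (∫ x : ℝ, Complex.exp (↑(-2 * π * x * ξ) * I) * (g t * gt (x - t)))
      = Complex.exp (↑(-2 * π * t * ξ) * I) * g t * 𝓕 gt ξ := by
    intro t
    rw [← MeasureTheory.integral_add_right_eq_self
      (fun x => Complex.exp (↑(-2 * π * x * ξ) * I) * (g t * gt (x - t))) t]
    simp only [add_sub_cancel_right]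
    rw [Real.fourier_real_eq_integral_exp_smul, ← integral_const_mul]
    congr 1
    ext x
    simp only [smul_eq_mul]
    rw [show ((-2 * π * (x + t) * ξ : ℝ) : ℂ) * I = ↑(-2 * π * x * ξ) * I + ↑(-2 * π * t * ξ) * I by
      push_cast; ring, Complex.exp_add]
    ring
  rw [integral_congr_ae (Filter.Eventually.of_forall inner_eq)]
  rw [integral_mul_const]
  have hFg : 𝓕 g ξ = ∫ a : ℝ, Complex.exp (↑(-2 * π * a * ξ) * I) * g a := by
    simpa [smul_eq_mul] using Real.fourier_real_eq_integral_exp_smul g ξ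
  rw [← hFg, hgt, fourier_conj]
  push_cast
  rw [Complex.mul_conj']

set_option maxHeartbeats 1000000 in
lemma plancherel_cc (g : ℝ → ℂ) (hgc : Continuous g) (hgs : HasCompactSupport g) :
    ∫ ξ : ℝ, ‖𝓕 g ξ‖ ^ 2 = ∫ x : ℝ, ‖g x‖ ^ 2 := by
  set gt : ℝ → ℂ := fun x ↦ (starRingEnd ℂ) (g (-x)) with hgt
  have hgtc : Continuous gt := Complex.continuous_conj.comp (hgc.comp continuous_neg)
  have hgts : HasCompactSupport gt :=
    (hgs.comp_homeomorph (Homeomorph.neg ℝ)).comp_left (map_zero _)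
  set k : ℝ → ℂ := convolution g gt (ContinuousLinearMap.mul ℂ ℂ) volume with hk
  have hkc : Continuous k :=
    hgts.continuous_convolution_right _ hgc.locallyIntegrable hgtc
  have hks : HasCompactSupport k :=
    HasCompactSupport.convolution (ContinuousLinearMap.mul ℂ ℂ) hgs hgts
  have hki : Integrable k := hkc.integrable_of_hasCompactSupport hks
  have hgi : Integrable g := hgc.integrable_of_hasCompactSupport hgs
  set A : ℝ := ∫ x : ℝ, ‖g x‖ ^ 2 with hA
  have hk0 : k 0 = (A : ℂ) := by
    rw [hk, convolution_def]
    simp only [ContinuousLinearMap.mul_apply', hgt, zero_sub, neg_neg]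
    rw [hA, show ((∫ x : ℝ, ‖g x‖ ^ 2 : ℝ) : ℂ) = ∫ x : ℝ, ((‖g x‖ ^ 2 : ℝ) : ℂ) from
      (integral_ofReal (𝕜 := ℂ)).symm]
    congr 1
    ext t
    push_cast
    rw [Complex.mul_conj']
  set Φ : ℝ → ℝ := fun ξ ↦ ‖𝓕 g ξ‖ ^ 2 with hΦ
  have hFk : ∀ ξ : ℝ, 𝓕 k ξ = ((Φ ξ : ℝ) : ℂ) := fun ξ ↦ fourier_autocorr g hgc hgs ξ
  have hΦc : Continuous Φ := by
    have : Continuous (𝓕 g) :=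
      VectorFourier.fourierIntegral_continuous Real.continuous_fourierChar
        (by exact continuous_inner) hgi
    exact (this.norm).pow 2
  -- Step 1: tendsto of Gaussian-regularized integrals of 𝓕 k to k 0
  have T1 := Real.tendsto_integral_gaussian_smul' hki (hkc.continuousAt (x := (0:ℝ)))
  have T3 : Tendsto (fun c : ℝ ↦ ∫ ξ : ℝ, Complex.exp (-(c⁻¹ : ℂ) * (‖ξ‖:ℂ) ^ 2) • 𝓕 k ξ)
      atTop (𝓝 (k 0)) := by
    apply T1.congr'
    filter_upwards [Ioi_mem_atTop 0] with c (hc : (0:ℝ) < c)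
    have hb : (0:ℝ) < ((c⁻¹ : ℂ)).re := by simpa using inv_pos.2 hc
    have J : Integrable (fun w : ℝ ↦ Complex.exp (-(c⁻¹:ℂ) * (‖w‖:ℂ) ^ 2)) := by
      have := GaussianFourier.integrable_cexp_neg_mul_sq_norm_add (V := ℝ) hb 0 (0:ℝ)
      simpa using this
    have flip := VectorFourier.integral_fourierIntegral_smul_eq_flip (L := innerₗ ℝ)
      Real.continuous_fourierChar continuous_inner J hki
    have hgauss : ∀ w : ℝ, 𝓕 (fun v : ℝ ↦ Complex.exp (-(c⁻¹:ℂ) * (‖v‖:ℂ) ^ 2)) w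
        = ((π * c : ℂ) ^ (Module.finrank ℝ ℝ / 2 : ℂ) *
            Complex.exp (-π ^ 2 * c * ‖(0:ℝ) - w‖ ^ 2)) := by
      intro w
      have := fourier_gaussian_innerProductSpace (V := ℝ) (b := (c⁻¹:ℂ)) hb w
      rw [show (fun v : ℝ ↦ Complex.exp (-(c⁻¹:ℂ) * (‖v‖:ℂ) ^ 2))
          = (fun v : ℝ ↦ Complex.exp (-(c⁻¹:ℂ) * ‖v‖ ^ 2)) by push_cast; rfl, this]
      have hc0 : (c : ℂ) ≠ 0 := by exact_mod_cast hc.ne'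
      congr 1
      · congr 1
        field_simp
      · congr 1
        rw [zero_sub, norm_neg]
        push_cast
        field_simp
    calc ∫ w : ℝ, ((π * c : ℂ) ^ (Module.finrank ℝ ℝ / 2 : ℂ) *
            Complex.exp (-π ^ 2 * c * ‖(0:ℝ) - w‖ ^ 2)) • k w
        = ∫ w : ℝ, (𝓕 (fun v : ℝ ↦ Complex.exp (-(c⁻¹:ℂ) * (‖v‖:ℂ) ^ 2)) w) • k w := by
          congr 1; ext w; rw [hgauss w]
      _ = ∫ ξ : ℝ, Complex.exp (-(c⁻¹ : ℂ) * (‖ξ‖:ℂ) ^ 2) • 𝓕 k ξ := by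
          simpa using! flip
  -- rewrite the integrand via 𝓕 k = Φ, as a real integral
  set I : ℝ → ℝ := fun c ↦ ∫ ξ : ℝ, Real.exp (-c⁻¹ * ‖ξ‖ ^ 2) * Φ ξ with hI
  have hIc : ∀ c : ℝ, (∫ ξ : ℝ, Complex.exp (-(c⁻¹ : ℂ) * (‖ξ‖:ℂ) ^ 2) • 𝓕 k ξ)
      = ((I c : ℝ) : ℂ) := by
    intro c
    rw [hI, show ((∫ ξ : ℝ, Real.exp (-c⁻¹ * ‖ξ‖ ^ 2) * Φ ξ : ℝ) : ℂ)
        = ∫ ξ : ℝ, ((Real.exp (-c⁻¹ * ‖ξ‖ ^ 2) * Φ ξ : ℝ) : ℂ) from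
      (integral_ofReal (𝕜 := ℂ)).symm]
    congr 1
    ext ξ
    rw [hFk ξ, smul_eq_mul]
    push_cast
    ring
  have T5 : Tendsto (fun c : ℝ ↦ ((I c : ℝ) : ℂ)) atTop (𝓝 (k 0)) := by
    apply T3.congr
    intro c
    exact hIc c
  have TI : Tendsto I atTop (𝓝 A) := by
    have := (Complex.continuous_re.tendsto (k 0)).comp T5
    simpa [hk0, Function.comp_def] using this
  -- Integrability of Φ
  have hbound : ∀ ξ : ℝ, Φ ξ ≤ (∫ x : ℝ, ‖g x‖) ^ 2 := by
    intro ξ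
    apply pow_le_pow_left₀ (norm_nonneg _)
    exact VectorFourier.norm_fourierIntegral_le_integral_norm _ _ _ _ _
  have hgauss_int : ∀ c : ℝ, 0 < c → Integrable (fun ξ : ℝ ↦ Real.exp (-c⁻¹ * ‖ξ‖ ^ 2) * Φ ξ) := by
    intro c hc
    apply Integrable.mono' ((integrable_exp_neg_mul_sq (inv_pos.2 hc)).const_mul
      ((∫ x : ℝ, ‖g x‖) ^ 2))
    · exact ((Real.continuous_exp.comp (by fun_prop)).mul hΦc).aestronglyMeasurable
    · filter_upwards with ξ
      rw [Real.norm_eq_abs, _root_.abs_of_nonneg (by positivity),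
        show ‖ξ‖ ^ 2 = ξ ^ 2 from by rw [Real.norm_eq_abs, _root_.sq_abs],
        mul_comm ((∫ x : ℝ, ‖g x‖) ^ 2) _]
      exact mul_le_mul_of_nonneg_left (hbound ξ) (Real.exp_pos _).le
  have hΦint : Integrable Φ := by
    constructor
    · exact hΦc.aestronglyMeasurable
    · rw [hasFiniteIntegral_iff_norm]
      have key : ∫⁻ ξ : ℝ, ENNReal.ofReal ‖Φ ξ‖ ≤ ENNReal.ofReal A := by
        have hlim_n : Tendsto (fun n : ℕ ↦ I ((n:ℝ)+1)) atTop (𝓝 A) :=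
          TI.comp (tendsto_atTop_add_const_right _ 1 tendsto_natCast_atTop_atTop)
        have step1 : ∫⁻ ξ : ℝ, ENNReal.ofReal ‖Φ ξ‖
            ≤ liminf (fun n : ℕ ↦ ∫⁻ ξ : ℝ,
              ENNReal.ofReal (Real.exp (-((n:ℝ)+1)⁻¹ * ‖ξ‖ ^ 2) * Φ ξ)) atTop := by
          have ptwise : ∀ ξ : ℝ, ENNReal.ofReal ‖Φ ξ‖
              = liminf (fun n : ℕ ↦ ENNReal.ofReal
                  (Real.exp (-((n:ℝ)+1)⁻¹ * ‖ξ‖ ^ 2) * Φ ξ)) atTop := by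
            intro ξ
            have h1 : Tendsto (fun n : ℕ ↦ Real.exp (-((n:ℝ)+1)⁻¹ * ‖ξ‖ ^ 2) * Φ ξ)
                atTop (𝓝 (Φ ξ)) := by
              have h2 : Tendsto (fun n : ℕ ↦ -((n:ℝ)+1)⁻¹ * ‖ξ‖ ^ 2) atTop (𝓝 0) := by
                have h2a : Tendsto (fun n : ℕ ↦ -((n:ℝ)+1)⁻¹) atTop (𝓝 0) := by
                  have := (tendsto_inv_atTop_zero.comp
                    (tendsto_atTop_add_const_right atTop (1:ℝ) tendsto_natCast_atTop_atTop)).neg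
                  simpa [Function.comp] using this
                have h3 := h2a.mul_const (‖ξ‖ ^ 2)
                rw [zero_mul] at h3
                exact h3
              have := (h2.rexp).mul_const (Φ ξ)
              simpa [_root_.sq_abs] using this
            rw [show ‖Φ ξ‖ = Φ ξ from abs_of_nonneg (by positivity)]
            exact ((ENNReal.continuous_ofReal.tendsto _).comp h1).liminf_eq.symm
          calc ∫⁻ ξ : ℝ, ENNReal.ofReal ‖Φ ξ‖
              = ∫⁻ ξ : ℝ, liminf (fun n : ℕ ↦ ENNReal.ofReal
                  (Real.exp (-((n:ℝ)+1)⁻¹ * ‖ξ‖ ^ 2) * Φ ξ)) atTop := by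
                apply lintegral_congr; intro ξ; exact ptwise ξ
            _ ≤ _ := by
                apply lintegral_liminf_le
                intro n
                apply ENNReal.measurable_ofReal.comp
                exact ((Real.continuous_exp.comp (by fun_prop)).mul hΦc).measurable
        have step2 : (fun n : ℕ ↦ ∫⁻ ξ : ℝ,
            ENNReal.ofReal (Real.exp (-((n:ℝ)+1)⁻¹ * ‖ξ‖ ^ 2) * Φ ξ))
            = fun n : ℕ ↦ ENNReal.ofReal (I ((n:ℝ)+1)) := by
          ext n
          rw [← ofReal_integral_eq_lintegral_ofReal (hgauss_int ((n:ℝ)+1) (by positivity))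
            (by filter_upwards with ξ; positivity)]
        rw [step2] at step1
        refine step1.trans (le_of_eq ?_)
        exact ((ENNReal.continuous_ofReal.tendsto _).comp hlim_n).liminf_eq
      exact lt_of_le_of_lt key ENNReal.ofReal_lt_top
  -- Dominated convergence on the other side
  have T4 := Real.tendsto_integral_cexp_sq_smul (f := fun ξ : ℝ ↦ ((Φ ξ : ℝ) : ℂ)) hΦint.ofReal
  have T4' : Tendsto (fun c : ℝ ↦ ((I c : ℝ) : ℂ)) atTop (𝓝 (∫ ξ : ℝ, ((Φ ξ : ℝ) : ℂ))) := by
    apply T4.congr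
    intro c
    rw [← hIc c]
    congr 1
    ext ξ
    rw [hFk ξ]
    norm_cast
  have : (∫ ξ : ℝ, ((Φ ξ : ℝ) : ℂ)) = ((∫ ξ : ℝ, Φ ξ : ℝ) : ℂ) := integral_ofReal (𝕜 := ℂ)
  rw [this] at T4'
  have := tendsto_nhds_unique T4' T5
  rw [hk0] at this
  exact_mod_cast this

end Aux

theorem stmt0 (h f : ℝ → ℂ) (γ σ : ℝ → ℝ)
    (hh_cont : Continuous h) (hh_supp : HasCompactSupport h) (hh_ne : h ≠ 0)
    (hγ_smooth : ContDiff ℝ 1 γ) (hγ_odd : ∀ t, γ (-t) = -γ t)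
    (hγ_bij : Function.Bijective γ) (hγ_deriv : ∀ t, deriv γ t ≠ 0)
    (hγ_bot : Tendsto γ atBot atBot) (hγ_top : Tendsto γ atTop atTop)
    (hσ_cont : Continuous σ) (hσ_ge : ∀ t, 1 ≤ σ t)
    (hσ_top : Tendsto σ atTop (nhds 1)) (hσ_bot : Tendsto σ atBot (nhds 1))
    (hf_cont : Continuous f) (hf_supp : HasCompactSupport f) :
    ∫ t : ℝ, ∫ ω : ℝ, ‖timeTransform h γ σ f t ω‖ ^ 2
      = ∫ t : ℝ, ∫ x : ℝ, σ t * ‖f x‖ ^ 2 * ‖h (σ t * (x - t))‖ ^ 2 := by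
  have hγdiff : Differentiable ℝ γ := hγ_smooth.differentiable one_ne_zero
  have hγcont : Continuous (deriv γ) := hγ_smooth.continuous_deriv le_rfl
  -- positivity of the derivative of γ
  have hγ'pos : ∀ ω : ℝ, 0 < deriv γ ω := by
    obtain ⟨b, hb0, hbγ⟩ : ∃ b : ℝ, 0 < b ∧ γ 0 < γ b := by
      obtain ⟨b, hb1, hb2⟩ := ((hγ_top.eventually_gt_atTop (γ 0)).and
        (eventually_gt_atTop 0)).exists
      exact ⟨b, hb2, hb1⟩
    obtain ⟨c, _, hc⟩ := exists_hasDerivAt_eq_slope γ (deriv γ) hb0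
      (hγ_smooth.continuous.continuousOn)
      (fun x _ => (hγdiff x).hasDerivAt)
    have hcpos : 0 < deriv γ c := by
      rw [hc]
      apply div_pos (by linarith) (by linarith)
    intro ω
    rcases lt_or_gt_of_ne (hγ_deriv ω) with hneg | hpos
    · exfalso
      have h0 : (0:ℝ) ∈ Set.uIcc (deriv γ ω) (deriv γ c) :=
        Set.mem_uIcc.2 (Or.inl ⟨hneg.le, hcpos.le⟩)
      obtain ⟨x, _, hx⟩ := intermediate_value_uIcc (hγcont.continuousOn (s := Set.uIcc ω c)) h0
      exact hγ_deriv x hx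
    · exact hpos
  -- pointwise (in t) identity between the inner integrals
  apply integral_congr_ae
  filter_upwards with t
  have hσt : (0:ℝ) < σ t := lt_of_lt_of_le one_pos (hσ_ge t)
  set g : ℝ → ℂ := fun x ↦ f x * (starRingEnd ℂ) (h (σ t * (x - t))) with hg
  have hgc : Continuous g :=
    hf_cont.mul (Complex.continuous_conj.comp (hh_cont.comp (by fun_prop)))
  have hgs : HasCompactSupport g := hf_supp.mul_right
  -- the transform as a Fourier transform of g
  have hM : ∀ ω : ℝ, timeTransform h γ σ f t ω
      = (Real.sqrt (deriv γ ω * σ t) : ℂ) * 𝓕 g (γ ω) := by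
    intro ω
    rw [timeTransform, Real.fourier_real_eq_integral_exp_smul, ← integral_const_mul]
    congr 1
    ext x
    rw [timeAtom]
    simp only [map_mul, Complex.conj_ofReal, smul_eq_mul, ← Complex.exp_conj, Complex.conj_I,
      map_ofNat, hg]
    rw [show (2:ℂ) * ↑π * -Complex.I * ↑(γ ω) * ↑x
        = ((-2 * π * x * γ ω : ℝ) : ℂ) * Complex.I by push_cast; ring]
    ring
  have hnorm : ∀ ω : ℝ, ‖timeTransform h γ σ f t ω‖ ^ 2
      = deriv γ ω * σ t * ‖𝓕 g (γ ω)‖ ^ 2 := by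
    intro ω
    rw [hM ω, norm_mul, Complex.norm_real, Real.norm_eq_abs,
      _root_.abs_of_nonneg (Real.sqrt_nonneg _), mul_pow,
      Real.sq_sqrt (mul_nonneg (hγ'pos ω).le hσt.le)]
  calc ∫ ω : ℝ, ‖timeTransform h γ σ f t ω‖ ^ 2
      = ∫ ω : ℝ, σ t * (|deriv γ ω| • ‖𝓕 g (γ ω)‖ ^ 2) := by
        congr 1
        ext ω
        rw [hnorm ω, smul_eq_mul, _root_.abs_of_nonneg (hγ'pos ω).le]
        ring
    _ = σ t * ∫ ω : ℝ, |deriv γ ω| • ‖𝓕 g (γ ω)‖ ^ 2 := integral_const_mul _ _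
    _ = σ t * ∫ u : ℝ, ‖𝓕 g u‖ ^ 2 := by
        congr 1
        have cov := integral_image_eq_integral_abs_deriv_smul MeasurableSet.univ
          (fun x _ => (hγdiff x).hasDerivAt.hasDerivWithinAt)
          (hγ_bij.injective.injOn) (fun u => ‖𝓕 g u‖ ^ 2)
        rw [show γ '' Set.univ = Set.univ by rw [Set.image_univ, hγ_bij.surjective.range_eq],
          MeasureTheory.setIntegral_univ, MeasureTheory.setIntegral_univ] at cov
        rw [← cov]
    _ = σ t * ∫ x : ℝ, ‖g x‖ ^ 2 := by rw [plancherel_cc g hgc hgs]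
    _ = ∫ x : ℝ, σ t * ‖f x‖ ^ 2 * ‖h (σ t * (x - t))‖ ^ 2 := by
        rw [← integral_const_mul]
        congr 1
        ext x
        rw [hg]
        simp only [norm_mul, RCLike.norm_conj]
        ring
end

section
/- Define c = inf_{t∈ℝ} ∫_ℝ |h(x σ(x+t))|² dx. Then c > 0, and the inverse Fourier transform of the kernel, given by (F⁻¹ K_σ)(t) = ∫_ℝ σ(x) |h(σ(x)(x − t))|² dx, satisfies (F⁻¹ K_σ)(t) ≥ c for every t ∈ ℝ. -/
open MeasureTheory Filter

lemma stmt9_pos_integral {f : ℝ → ℝ} (hf : Continuous f) (hs : HasCompactSupport f)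
    (h0 : ∀ x, 0 ≤ f x) {x₀ : ℝ} (hx : 0 < f x₀) : 0 < ∫ x, f x := by
  have hint : Integrable f volume := hf.integrable_of_hasCompactSupport hs
  rw [integral_pos_iff_support_of_nonneg h0 hint]
  exact hf.isOpen_support.measure_pos volume ⟨x₀, hx.ne'⟩

theorem stmt9 (h : ℝ → ℂ) (σ : ℝ → ℝ)
    (hh_cont : Continuous h) (hh_supp : HasCompactSupport h) (hh_ne : h ≠ 0)
    (hσ_cont : Continuous σ) (hσ_ge : ∀ t, 1 ≤ σ t)
    (hσ_top : Tendsto σ atTop (nhds 1)) (hσ_bot : Tendsto σ atBot (nhds 1)) :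
    (0 < ⨅ t : ℝ, ∫ x : ℝ, ‖h (x * σ (x + t))‖ ^ 2) ∧
    ∀ t : ℝ, (⨅ s : ℝ, ∫ x : ℝ, ‖h (x * σ (x + s))‖ ^ 2)
      ≤ ∫ x : ℝ, σ x * ‖h (σ x * (x - t))‖ ^ 2 := by
  have hσ_pos : ∀ t, 0 < σ t := fun t => lt_of_lt_of_le one_pos (hσ_ge t)
  -- a point where h is nonzero
  obtain ⟨x₀, hx₀⟩ : ∃ x, h x ≠ 0 := by
    by_contra hc; push_neg at hc; exact hh_ne (funext hc)
  -- radius of support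
  obtain ⟨R₀, hR₀⟩ := hh_supp.isBounded.subset_closedBall 0
  set R := max R₀ 1 with hRdef
  have hRz : ∀ y : ℝ, R < |y| → h y = 0 := by
    intro y hy
    apply image_eq_zero_of_notMem_tsupport
    intro hm
    have h1 := Metric.mem_closedBall.mp (hR₀ hm)
    rw [Real.dist_eq, sub_zero] at h1
    have h2 : R₀ ≤ R := le_max_left _ _
    linarith
  have hR1 : (1:ℝ) ≤ R := le_max_right _ _
  -- bound on h
  obtain ⟨C, hC⟩ : ∃ C, ∀ x, ‖h x‖ ≤ C := by
    obtain ⟨C, hC⟩ := hh_cont.norm.bounded_above_of_compact_support hh_supp.norm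
    exact ⟨C, fun x => by simpa using hC x⟩
  have hC0 : 0 ≤ C := le_trans (norm_nonneg _) (hC 0)
  -- the family g and F
  set g : ℝ → ℝ → ℝ := fun t x => ‖h (x * σ (x + t))‖ ^ 2 with hgdef
  set F : ℝ → ℝ := fun t => ∫ x, g t x with hFdef
  have hg_nonneg : ∀ t x, 0 ≤ g t x := fun t x => by positivity
  have hg_contx : ∀ t, Continuous (g t) := fun t =>
    ((hh_cont.comp (continuous_id.mul (hσ_cont.comp
      (continuous_id.add continuous_const)))).norm.pow 2)
  have hg_contt : ∀ x, Continuous fun t => g t x := fun x =>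
    ((hh_cont.comp (continuous_const.mul (hσ_cont.comp
      (continuous_const.add continuous_id)))).norm.pow 2)
  have habs : ∀ t x : ℝ, |x| ≤ |x * σ (x + t)| := by
    intro t x
    rw [abs_mul, abs_of_pos (hσ_pos (x + t))]
    exact le_mul_of_one_le_right (abs_nonneg x) (hσ_ge _)
  have hg_zero : ∀ t x, R < |x| → g t x = 0 := by
    intro t x hx
    have : R < |x * σ (x + t)| := lt_of_lt_of_le hx (habs t x)
    simp [hgdef, hRz _ this]
  have hg_hcs : ∀ t, HasCompactSupport (g t) := by
    intro t
    apply HasCompactSupport.intro (isCompact_closedBall (0:ℝ) R)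
    intro x hx
    rw [Metric.mem_closedBall, Real.dist_eq, sub_zero, not_le] at hx
    exact hg_zero t x hx
  have hg_int : ∀ t, Integrable (g t) volume := fun t =>
    (hg_contx t).integrable_of_hasCompactSupport (hg_hcs t)
  have hg_bound : ∀ t x, g t x ≤ C ^ 2 := by
    intro t x
    have := hC (x * σ (x + t))
    have h0 := norm_nonneg (h (x * σ (x + t)))
    simp only [hgdef]
    nlinarith
  -- surjectivity
  have hsurj : ∀ t y : ℝ, ∃ x, x * σ (x + t) = y := by
    intro t y
    have hcont : Continuous fun x => x * σ (x + t) :=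
      continuous_id.mul (hσ_cont.comp (continuous_id.add continuous_const))
    rcases le_or_gt 0 y with hy | hy
    · have h2 : y ≤ y * σ (y + t) := le_mul_of_one_le_right hy (hσ_ge _)
      obtain ⟨x, _, hx⟩ := intermediate_value_Icc hy hcont.continuousOn
        (Set.mem_Icc.mpr ⟨by simpa using hy, h2⟩)
      exact ⟨x, hx⟩
    · have h2 : y * σ (y + t) ≤ y := by nlinarith [hσ_ge (y + t)]
      obtain ⟨x, _, hx⟩ := intermediate_value_Icc hy.le hcont.continuousOn
        (Set.mem_Icc.mpr ⟨h2, by simpa using hy.le⟩)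
      exact ⟨x, hx⟩
  -- positivity of F
  have hFpos : ∀ t, 0 < F t := by
    intro t
    obtain ⟨x, hx⟩ := hsurj t x₀
    have : 0 < g t x := by
      have he : g t x = ‖h x₀‖ ^ 2 := by simp [hgdef, hx]
      rw [he]
      exact pow_pos (norm_pos_iff.mpr hx₀) 2
    exact stmt9_pos_integral (hg_contx t) (hg_hcs t) (hg_nonneg t) this
  -- the bound function
  set bound : ℝ → ℝ := (Metric.closedBall (0:ℝ) R).indicator (fun _ => C ^ 2) with hbdef
  have hbound_int : Integrable bound volume := by
    rw [hbdef, integrable_indicator_iff measurableSet_closedBall]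
    exact (integrableOn_const_iff (C := C ^ 2)).mpr (Or.inr (measure_closedBall_lt_top))
  have hbound_le : ∀ t x, ‖g t x‖ ≤ bound x := by
    intro t x
    rw [Real.norm_of_nonneg (hg_nonneg t x), hbdef]
    by_cases hx : x ∈ Metric.closedBall (0:ℝ) R
    · rw [Set.indicator_of_mem hx]; exact hg_bound t x
    · rw [Set.indicator_of_notMem hx]
      rw [Metric.mem_closedBall, Real.dist_eq, sub_zero, not_le] at hx
      rw [hg_zero t x hx]
  -- continuity of F
  have hFcont : Continuous F := by
    apply continuous_of_dominated (bound := bound)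
      (fun t => (hg_contx t).aestronglyMeasurable)
      (fun t => Eventually.of_forall (hbound_le t)) hbound_int
    exact Eventually.of_forall fun x => hg_contt x
  -- limits
  set L : ℝ := ∫ x : ℝ, ‖h x‖ ^ 2 with hLdef
  have hL_pos : 0 < L := by
    apply stmt9_pos_integral (hh_cont.norm.pow 2)
      (f := fun x => ‖h x‖ ^ 2) (by have := hh_supp.comp_left (g := fun z : ℂ => ‖z‖ ^ 2) (by simp); exact this)
      (fun x => by positivity) (x₀ := x₀) (pow_pos (norm_pos_iff.mpr hx₀) 2)
  have hlim : ∀ l : Filter ℝ, l.IsCountablyGenerated → Tendsto σ l (nhds 1) →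
      (∀ x : ℝ, Tendsto (fun t => x + t) l l) → Tendsto F l (nhds L) := by
    intro l hlcg hσl hshift
    haveI := hlcg
    apply tendsto_integral_filter_of_dominated_convergence bound
      (Eventually.of_forall fun t => (hg_contx t).aestronglyMeasurable)
      (Eventually.of_forall fun t => Eventually.of_forall (hbound_le t)) hbound_int
    apply Eventually.of_forall
    intro x
    have h1 : Tendsto (fun t => σ (x + t)) l (nhds 1) := hσl.comp (hshift x)
    have h2 : Tendsto (fun t => x * σ (x + t)) l (nhds x) := by
      simpa using tendsto_const_nhds.mul h1
    exact (((hh_cont.tendsto x).comp h2).norm.pow 2)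
  have hFtop : Tendsto F atTop (nhds L) :=
    hlim atTop inferInstance hσ_top fun x => tendsto_atTop_add_const_left atTop x tendsto_id
  have hFbot : Tendsto F atBot (nhds L) :=
    hlim atBot inferInstance hσ_bot fun x => tendsto_atBot_add_const_left atBot x tendsto_id
  -- a positive lower bound
  obtain ⟨a, ha⟩ := eventually_atTop.mp (hFtop.eventually (eventually_gt_nhds (by linarith : L/2 < L)))
  obtain ⟨b, hb⟩ := eventually_atBot.mp (hFbot.eventually (eventually_gt_nhds (by linarith : L/2 < L)))
  obtain ⟨t₀, ht₀K, ht₀min⟩ := isCompact_Icc.exists_isMinOn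
    (Set.nonempty_Icc.mpr (le_trans (min_le_right b 0) (le_max_right a 0)))
    hFcont.continuousOn (s := Set.Icc (min b 0) (max a 0))
  set c : ℝ := min (L/2) (F t₀) with hcdef
  have hc0 : 0 < c := lt_min (by linarith) (hFpos t₀)
  have hle : ∀ t, c ≤ F t := by
    intro t
    by_cases htK : t ∈ Set.Icc (min b 0) (max a 0)
    · exact le_trans (min_le_right _ _) (ht₀min htK)
    · rw [Set.mem_Icc, not_and_or, not_le, not_le] at htK
      rcases htK with h1 | h1
      · exact le_trans (min_le_left _ _) (hb t (le_trans h1.le (min_le_left _ _))).le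
      · exact le_trans (min_le_left _ _) (ha t (le_trans (le_max_left a 0) h1.le)).le
  have hbdd : BddBelow (Set.range F) := by
    refine ⟨c, ?_⟩
    rintro y ⟨t, rfl⟩
    exact hle t
  constructor
  · exact lt_of_lt_of_le hc0 (le_ciInf hle)
  · intro t
    have h1 : (⨅ s : ℝ, F s) ≤ F t := ciInf_le hbdd t
    have h2 : F t ≤ ∫ x : ℝ, σ x * ‖h (σ x * (x - t))‖ ^ 2 := by
      set G : ℝ → ℝ := fun x => ‖h ((x - t) * σ x)‖ ^ 2 with hGdef
      have hstep : F t = ∫ x, G x := by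
        have : F t = ∫ x, G (x + t) := by
          simp only [hFdef, hGdef, hgdef, add_sub_cancel_right]
        rw [this, integral_add_right_eq_self]
      rw [hstep]
      have hG_cont : Continuous G :=
        ((hh_cont.comp ((continuous_id.sub continuous_const).mul hσ_cont)).norm.pow 2)
      have hG_hcs : HasCompactSupport G := by
        apply HasCompactSupport.intro (isCompact_closedBall t R)
        intro x hx
        rw [Metric.mem_closedBall, Real.dist_eq, not_le] at hx
        have habs' : |x - t| ≤ |(x - t) * σ x| := by
          rw [abs_mul, abs_of_pos (hσ_pos x)]
          exact le_mul_of_one_le_right (abs_nonneg _) (hσ_ge _)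
        simp [hGdef, hRz _ (lt_of_lt_of_le hx habs')]
      set P : ℝ → ℝ := fun x => σ x * ‖h (σ x * (x - t))‖ ^ 2 with hPdef
      have hP_cont : Continuous P :=
        hσ_cont.mul ((hh_cont.comp (hσ_cont.mul (continuous_id.sub continuous_const))).norm.pow 2)
      have hP_hcs : HasCompactSupport P := by
        apply HasCompactSupport.intro (isCompact_closedBall t R)
        intro x hx
        rw [Metric.mem_closedBall, Real.dist_eq, not_le] at hx
        have habs' : |x - t| ≤ |σ x * (x - t)| := by
          rw [abs_mul, abs_of_pos (hσ_pos x)]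
          exact le_mul_of_one_le_left (abs_nonneg _) (hσ_ge _)
        simp [hPdef, hRz _ (lt_of_lt_of_le hx habs')]
      apply integral_mono (hG_cont.integrable_of_hasCompactSupport hG_hcs)
        (hP_cont.integrable_of_hasCompactSupport hP_hcs)
      intro x
      simp only [hGdef, hPdef, mul_comm (x - t) (σ x)]
      exact le_mul_of_one_le_left (by positivity) (hσ_ge x)
    exact h1.trans h2
end
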